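/- Let H be a complex Hilbert space, n ≥ 2, and let x₁, x₂, …, xₙ, e ∈ H with ‖e‖ = 1. Then |∏_{k=1}^n ⟨xₖ, e⟩| ≤ (|⟨x₁, x₂⟩| · |∏_{k=3}^n ⟨xₖ, e⟩| + ∏_{k=1}^n ‖xₖ‖) / 2. -/

import Mathlib

open scoped InnerProductSpace

variable {H : Type*} [NormedAddCommGroup H] [InnerProductSpace ℂ H] [CompleteSpace H]

/-- The numerical radius of a bounded linear operator. -/
noncomputable def numRadius (T : H →L[ℂ] H) : ℝ :=
  sSup {r : ℝ | ∃ x : H, ‖x‖ = 1 ∧ r = ‖⟪T x, x⟫_ℂ‖}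

lemma buzano_aux (a b e : H) (he : ‖e‖ = 1) :
    ‖⟪a, e⟫_ℂ‖ * ‖⟪b, e⟫_ℂ‖ ≤ (‖⟪a, b⟫_ℂ‖ + ‖a‖ * ‖b‖) / 2 := by
  set u : H := ⟪e, a⟫_ℂ • e with hu
  have h1 : ⟪u, b⟫_ℂ = ⟪a, e⟫_ℂ * ⟪e, b⟫_ℂ := by
    rw [hu, inner_smul_left, inner_conj_symm]
  have hnorm : ‖(2:ℂ) • u - a‖ = ‖a‖ := by
    have hsq : ‖(2:ℂ) • u - a‖ ^ 2 = ‖a‖ ^ 2 := by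
      have hexp := @norm_sub_sq ℂ H _ _ _ ((2:ℂ) • u) a
      rw [hexp]
      have h2 : RCLike.re ⟪(2:ℂ) • u, a⟫_ℂ = 2 * ‖⟪e, a⟫_ℂ‖ ^ 2 := by
        rw [hu, inner_smul_left, inner_smul_left, RCLike.conj_mul]
        simp [Complex.mul_re]
        rw [← Complex.ofReal_pow, Complex.ofReal_re]
      have h5 : ‖(2:ℂ) • u‖ ^ 2 = 4 * ‖⟪e, a⟫_ℂ‖ ^ 2 := by
        rw [hu, norm_smul, norm_smul, he]
        simp
        ring
      rw [h2, h5]; ring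
    have h0 : (0:ℝ) ≤ ‖a‖ := norm_nonneg _
    nlinarith [norm_nonneg ((2:ℂ) • u - a)]
  have key : (2:ℂ) * (⟪a, e⟫_ℂ * ⟪e, b⟫_ℂ) = ⟪(2:ℂ) • u - a, b⟫_ℂ + ⟪a, b⟫_ℂ := by
    rw [inner_sub_left, hu, inner_smul_left, inner_smul_left,
      inner_conj_symm a e]
    have hc2 : (starRingEnd ℂ) 2 = 2 := Complex.conj_ofNat 2
    rw [hc2]
    ring
  have h3 : 2 * (‖⟪a, e⟫_ℂ‖ * ‖⟪e, b⟫_ℂ‖) ≤ ‖a‖ * ‖b‖ + ‖⟪a, b⟫_ℂ‖ := by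
    have hle := norm_add_le (⟪(2:ℂ) • u - a, b⟫_ℂ) (⟪a, b⟫_ℂ)
    rw [← key] at hle
    have hcs : ‖⟪(2:ℂ) • u - a, b⟫_ℂ‖ ≤ ‖a‖ * ‖b‖ := by
      calc ‖⟪(2:ℂ) • u - a, b⟫_ℂ‖ ≤ ‖(2:ℂ) • u - a‖ * ‖b‖ := norm_inner_le_norm _ _
        _ = ‖a‖ * ‖b‖ := by rw [hnorm]
    calc 2 * (‖⟪a, e⟫_ℂ‖ * ‖⟪e, b⟫_ℂ‖)
        = ‖(2:ℂ) * (⟪a, e⟫_ℂ * ⟪e, b⟫_ℂ)‖ := by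
          rw [norm_mul, norm_mul]; norm_num
      _ ≤ ‖⟪(2:ℂ) • u - a, b⟫_ℂ‖ + ‖⟪a, b⟫_ℂ‖ := hle
      _ ≤ ‖a‖ * ‖b‖ + ‖⟪a, b⟫_ℂ‖ := by linarith
  rw [← inner_conj_symm e b, RCLike.norm_conj] at h3
  linarith

theorem buzano_extension (n : ℕ) (hn : 2 ≤ n) (x : ℕ → H) (e : H) (he : ‖e‖ = 1) :
    ‖∏ k ∈ Finset.Icc 1 n, ⟪x k, e⟫_ℂ‖ ≤
      (‖⟪x 1, x 2⟫_ℂ‖ * ‖∏ k ∈ Finset.Icc 3 n, ⟪x k, e⟫_ℂ‖ +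
        ∏ k ∈ Finset.Icc 1 n, ‖x k‖) / 2 := by
  have h1mem : (1:ℕ) ∉ insert 2 (Finset.Icc 3 n) := by simp
  have h2mem : (2:ℕ) ∉ Finset.Icc 3 n := by simp
  have hsplit : Finset.Icc 1 n = insert 1 (insert 2 (Finset.Icc 3 n)) := by
    ext k; simp only [Finset.mem_Icc, Finset.mem_insert]; omega
  rw [hsplit, Finset.prod_insert h1mem, Finset.prod_insert h2mem,
    Finset.prod_insert h1mem, Finset.prod_insert h2mem]
  set P := ∏ k ∈ Finset.Icc 3 n, ⟪x k, e⟫_ℂ with hP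
  set Q := ∏ k ∈ Finset.Icc 3 n, ‖x k‖ with hQ
  have hPQ : ‖P‖ ≤ Q := by
    rw [hP, hQ, norm_prod]
    refine Finset.prod_le_prod (fun k _ => norm_nonneg _) (fun k _ => ?_)
    calc ‖⟪x k, e⟫_ℂ‖ ≤ ‖x k‖ * ‖e‖ := norm_inner_le_norm _ _
      _ = ‖x k‖ := by rw [he, mul_one]
  have hbuz := buzano_aux (x 1) (x 2) e he
  have hlhs : ‖⟪x 1, e⟫_ℂ * (⟪x 2, e⟫_ℂ * P)‖ = ‖⟪x 1, e⟫_ℂ‖ * ‖⟪x 2, e⟫_ℂ‖ * ‖P‖ := by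
    rw [norm_mul, norm_mul]; ring
  rw [hlhs]
  have hPn : (0:ℝ) ≤ ‖P‖ := norm_nonneg _
  have h1n : (0:ℝ) ≤ ‖x 1‖ := norm_nonneg _
  have h2n : (0:ℝ) ≤ ‖x 2‖ := norm_nonneg _
  nlinarith [mul_le_mul_of_nonneg_right hbuz hPn,
    mul_le_mul_of_nonneg_left hPQ (mul_nonneg h1n h2n)]
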